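/- If (X_a)_{a∈A} is a finite family of real random variables with E[exp(X_a²)] ≤ 2 for each a, then E[max_{a∈A} |X_a|] ≤ √(log(1 + |A|)). -/

import Mathlib

open MeasureTheory

/-- if E[exp(X_a²)] ≤ 2 for each a in a finite family, then
E[max_a |X_a|] ≤ √(log(1 + |𝒜|)). -/
theorem orlicz_subgaussian_maximal_bound {Ω : Type*} [MeasurableSpace Ω]
    (μ : Measure Ω) [IsProbabilityMeasure μ]
    {ι : Type*} [Fintype ι] [Nonempty ι]
    (X : ι → Ω → ℝ)
    (hmeas : ∀ a, Measurable (X a))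
    (hint : ∀ a, Integrable (fun ω => Real.exp ((X a ω) ^ 2)) μ)
    (hmom : ∀ a, ∫ ω, Real.exp ((X a ω) ^ 2) ∂μ ≤ 2) :
    ∫ ω, (⨆ a, |X a ω|) ∂μ ≤ Real.sqrt (Real.log (1 + (Fintype.card ι : ℝ))) := by
  set M : Ω → ℝ := fun ω => ⨆ a, |X a ω| with hM
  have hMmeas : Measurable M := by
    apply Measurable.iSup
    exact fun a => (hmeas a).abs
  have hM0 : ∀ ω, 0 ≤ M ω := fun ω => Real.iSup_nonneg (fun a => abs_nonneg _)
  -- pointwise bound on exp(M²)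
  have hpt : ∀ ω, Real.exp (M ω ^ 2) ≤ 1 + ∑ a, (Real.exp ((X a ω) ^ 2) - 1) := by
    intro ω
    obtain ⟨a, ha⟩ : ∃ a, M ω = |X a ω| := by
      obtain ⟨a, ha⟩ := Finite.exists_max (fun a => |X a ω|)
      exact ⟨a, le_antisymm (ciSup_le ha) (le_ciSup (f := fun a => |X a ω|) (Set.Finite.bddAbove (Set.finite_range _)) a)⟩
    have : Real.exp (M ω ^ 2) = Real.exp ((X a ω) ^ 2) := by rw [ha, sq_abs]
    rw [this]
    have h1 : Real.exp ((X a ω) ^ 2) - 1 ≤ ∑ b, (Real.exp ((X b ω) ^ 2) - 1) := by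
      apply Finset.single_le_sum (f := fun b => Real.exp ((X b ω) ^ 2) - 1)
      · intro b _
        simp [Real.one_le_exp_iff.2 (sq_nonneg _)]
      · exact Finset.mem_univ a
    linarith
  -- integrable dominating function
  have hgint : Integrable (fun ω => 1 + ∑ a, (Real.exp ((X a ω) ^ 2) - 1)) μ := by
    apply (integrable_const 1).add
    apply integrable_finset_sum
    intro a _
    exact (hint a).sub (integrable_const 1)
  have hexpM : Integrable (fun ω => Real.exp (M ω ^ 2)) μ := by
    apply hgint.mono ((hMmeas.pow_const 2).exp.aestronglyMeasurable)
    filter_upwards with ω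
    rw [Real.norm_eq_abs, abs_of_nonneg (Real.exp_nonneg _)]
    refine (hpt ω).trans (le_abs_self _)
  have hM2int : Integrable (fun ω => M ω ^ 2) μ := by
    apply hexpM.mono ((hMmeas.pow_const 2).aestronglyMeasurable)
    filter_upwards with ω
    rw [Real.norm_eq_abs, abs_of_nonneg (sq_nonneg _), Real.norm_eq_abs,
      abs_of_nonneg (Real.exp_nonneg _)]
    linarith [Real.add_one_le_exp (M ω ^ 2)]
  have hMint : Integrable M μ := by
    apply (hM2int.add (integrable_const 1)).mono hMmeas.aestronglyMeasurable
    filter_upwards with ω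
    rw [Real.norm_eq_abs, abs_of_nonneg (hM0 ω), Real.norm_eq_abs]
    have h := hM0 ω
    have : M ω ≤ M ω ^ 2 + 1 := by nlinarith
    exact this.trans (le_abs_self _)
  -- Jensen for x^2
  have jensen1 : (∫ ω, M ω ∂μ) ^ 2 ≤ ∫ ω, M ω ^ 2 ∂μ := by
    have hconv : ConvexOn ℝ Set.univ (fun x : ℝ => x ^ 2) := Even.convexOn_pow (even_two)
    have := hconv.map_integral_le (continuous_pow 2).continuousOn isClosed_univ
      (Filter.Eventually.of_forall (fun ω => Set.mem_univ _)) hMint hM2int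
    simpa using this
  -- Jensen for exp
  have jensen2 : Real.exp (∫ ω, M ω ^ 2 ∂μ) ≤ ∫ ω, Real.exp (M ω ^ 2) ∂μ := by
    have := convexOn_exp.map_integral_le Real.continuous_exp.continuousOn isClosed_univ
      (Filter.Eventually.of_forall (fun ω => Set.mem_univ _)) hM2int hexpM
    simpa using this
  -- bound the integral of exp(M^2)
  have hbound : ∫ ω, Real.exp (M ω ^ 2) ∂μ ≤ 1 + (Fintype.card ι : ℝ) := by
    calc ∫ ω, Real.exp (M ω ^ 2) ∂μ
        ≤ ∫ ω, (1 + ∑ a, (Real.exp ((X a ω) ^ 2) - 1)) ∂μ :=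
          integral_mono hexpM hgint hpt
      _ = 1 + ∑ a, ((∫ ω, Real.exp ((X a ω) ^ 2) ∂μ) - 1) := by
          have hsub : ∀ a : ι, Integrable (fun ω => Real.exp ((X a ω) ^ 2) - 1) μ :=
            fun a => (hint a).sub (integrable_const 1)
          have hsum : Integrable (fun ω => ∑ a, (Real.exp ((X a ω) ^ 2) - 1)) μ :=
            integrable_finset_sum _ (fun a _ => hsub a)
          rw [integral_add (integrable_const 1) hsum,
            integral_finset_sum _ (fun a _ => hsub a)]
          simp only [integral_sub (hint _) (integrable_const 1), integral_const,
            measure_univ, ENNReal.toReal_one, probReal_univ, one_smul, smul_eq_mul, mul_one]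
      _ ≤ 1 + ∑ a : ι, (1 : ℝ) := by
          gcongr with a
          linarith [hmom a]
      _ = 1 + (Fintype.card ι : ℝ) := by simp
  have hM2le : ∫ ω, M ω ^ 2 ∂μ ≤ Real.log (1 + (Fintype.card ι : ℝ)) := by
    have hpos : (0 : ℝ) < 1 + (Fintype.card ι : ℝ) := by positivity
    rw [← Real.exp_le_exp, Real.exp_log hpos]
    exact le_trans jensen2 hbound
  have h0 : 0 ≤ ∫ ω, M ω ∂μ := integral_nonneg hM0
  have := Real.sqrt_le_sqrt (jensen1.trans hM2le)
  rwa [Real.sqrt_sq h0] at this
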